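/- Let φ be a nontrivial exponential map on an integral domain A over a field k, let x ∈ A have minimal positive φ-degree n, and set c = D^n(x) (the coefficient of U^n in φ(x)). Then, inside the fraction field of A, A is contained in the subring A^φ[c^{−1}][x] generated by A^φ, the inverse of c, and x. -/
import Mathlib


open Polynomial

/-- An exponential map on a `k`-algebra `A`: a `k`-algebra homomorphism `φ : A → A[U]`
such that evaluating at `U = 0` is the identity and `φ_S φ_U = φ_{S+U}`. -/
def IsExpMap {k A : Type*} [CommSemiring k] [CommSemiring A] [Algebra k A]
    (φ : A →ₐ[k] A[X]) : Prop :=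
  (∀ a : A, (φ a).eval 0 = a) ∧
  (∀ a : A,
    eval₂ ((mapRingHom (C : A →+* A[X])).comp (φ : A →+* A[X])) (C X) (φ a)
      = eval₂ ((C : A[X] →+* A[X][X]).comp (C : A →+* A[X])) (X + C X) (φ a))

/-- The ring of `φ`-invariants `A^φ = {a : A | φ a = a}`. -/
noncomputable def expInv {k A : Type*} [CommSemiring k] [CommSemiring A] [Algebra k A]
    (φ : A →ₐ[k] A[X]) : Subalgebra k A :=
  AlgHom.equalizer φ (IsScalarTower.toAlgHom k A A[X])

/-- The AK invariant: the intersection of the rings of invariants of all exponential maps. -/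
noncomputable def AK (k A : Type*) [CommSemiring k] [CommSemiring A] [Algebra k A] : Subalgebra k A :=
  ⨅ φ ∈ {ψ : A →ₐ[k] A[X] | IsExpMap ψ}, expInv φ

section Aux

variable {k A : Type*} [CommSemiring k] [CommSemiring A] [Algebra k A]

theorem expmap_coeff_zero (φ : A →ₐ[k] A[X]) (hφ : IsExpMap φ) (a : A) :
    (φ a).coeff 0 = a := by
  rw [coeff_zero_eq_eval_zero]; exact hφ.1 a

/-- The fundamental comultiplication identity on coefficients:
`D^j (D^i a) = choose (i+j) j * D^(i+j) a`. -/
theorem expmap_coeff_coeff (φ : A →ₐ[k] A[X]) (hφ : IsExpMap φ) (a : A) (i j : ℕ) :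
    (φ ((φ a).coeff i)).coeff j = ((i + j).choose j : A) * (φ a).coeff (i + j) := by
  by_cases hi : (φ a).natDegree < i
  · rw [coeff_eq_zero_of_natDegree_lt hi, map_zero, coeff_zero,
      coeff_eq_zero_of_natDegree_lt (lt_of_lt_of_le hi (Nat.le_add_right _ _)), mul_zero]
  push_neg at hi
  have h2 := congrArg (fun q : A[X][X] => (q.coeff j).coeff i) (hφ.2 a)
  simp only [eval₂_eq_sum_range] at h2
  simp only [RingHom.comp_apply, coe_mapRingHom, finset_sum_coeff] at h2
  have hL : ∀ l : ℕ,
      (((map C (φ ((φ a).coeff l)) * (C X : A[X][X]) ^ l).coeff j).coeff i)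
        = ((φ ((φ a).coeff l)).coeff j) * (if i = l then 1 else 0) := by
    intro l
    rw [← map_pow (C : A[X] →+* A[X][X]) X l, coeff_mul_C, coeff_map, coeff_C_mul, coeff_X_pow]
  have hR : ∀ l : ℕ,
      ((((C : A[X] →+* A[X][X]) ((C : A →+* A[X]) ((φ a).coeff l)) * (X + C X) ^ l).coeff j).coeff i)
        = (φ a).coeff l * ((if i = l - j then 1 else 0) * (l.choose j : A)) := by
    intro l
    rw [coeff_C_mul, coeff_X_add_C_pow, coeff_C_mul, ← C_eq_natCast, coeff_mul_C, coeff_X_pow]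
  simp only [AlgHom.coe_toRingHom] at h2
  simp only [hL, hR, mul_ite, mul_one, mul_zero, ite_mul, zero_mul] at h2
  rw [Finset.sum_ite_eq, if_pos (Finset.mem_range.mpr (Nat.lt_succ_of_le hi))] at h2
  rw [h2, Finset.sum_eq_single (i + j)]
  · rw [if_pos (by omega : i = i + j - j), one_mul, mul_comm]
  · intro b _ hb
    rcases lt_or_ge b j with hbj | hbj
    · simp [Nat.choose_eq_zero_of_lt hbj]
    · rw [if_neg (by omega)]
  · intro hnotin
    rw [if_pos (by omega : i = i + j - j),
      coeff_eq_zero_of_natDegree_lt (by simpa [Nat.lt_succ_iff, not_le] using hnotin), zero_mul]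


/-- `deg (D^i a) ≤ deg a - i`. -/
theorem expmap_natDegree_coeff_le (φ : A →ₐ[k] A[X]) (hφ : IsExpMap φ) (a : A) (i : ℕ) :
    (φ ((φ a).coeff i)).natDegree ≤ (φ a).natDegree - i := by
  rw [natDegree_le_iff_coeff_eq_zero]
  intro j hj
  rw [expmap_coeff_coeff φ hφ]
  by_cases hi : i ≤ (φ a).natDegree
  · rw [coeff_eq_zero_of_natDegree_lt (by omega), mul_zero]
  · rw [coeff_eq_zero_of_natDegree_lt (by omega), mul_zero]

/-- The top coefficient of `φ a` is `φ`-invariant. -/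
theorem expmap_top_coeff_mem (φ : A →ₐ[k] A[X]) (hφ : IsExpMap φ) (a : A) :
    (φ a).coeff (φ a).natDegree ∈ expInv φ := by
  have : φ ((φ a).coeff (φ a).natDegree) = C ((φ a).coeff (φ a).natDegree) := by
    ext j
    rcases Nat.eq_zero_or_pos j with rfl | hj
    · rw [expmap_coeff_zero φ hφ, coeff_C_zero]
    · rw [expmap_coeff_coeff φ hφ, coeff_eq_zero_of_natDegree_lt (by omega), mul_zero,
        coeff_C, if_neg (by omega)]
  show φ _ = _
  rw [this]
  simp [Polynomial.algebraMap_eq]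

end Aux

section AuxDomain

variable {k A : Type*} [CommSemiring k] [CommRing A] [IsDomain A] [Algebra k A]

/-- If the binomial coefficient `choose (deg a) j` is nonzero in `A`, there exists an
element of `φ`-degree exactly `j`. -/
theorem expmap_exists_deg (φ : A →ₐ[k] A[X]) (hφ : IsExpMap φ) {a : A} {j : ℕ}
    (hj : 0 < j) (hjle : j ≤ (φ a).natDegree)
    (hch : ((((φ a).natDegree).choose j : ℕ) : A) ≠ 0) :
    ∃ a' : A, (φ a').natDegree = j := by
  set m := (φ a).natDegree with hm
  have hane : φ a ≠ 0 := by
    intro h0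
    rw [h0] at hm
    simp [hm] at hjle; omega
  refine ⟨(φ a).coeff (m - j), le_antisymm ?_ ?_⟩
  · exact (expmap_natDegree_coeff_le φ hφ a (m - j)).trans (by omega)
  · apply le_natDegree_of_ne_zero
    rw [expmap_coeff_coeff φ hφ, Nat.sub_add_cancel hjle]
    exact mul_ne_zero hch (by simpa [hm] using mt leadingCoeff_eq_zero.mp hane)

/-- Lucas-type fact: `p` does not divide `choose m (p ^ (v_p m))` for `m > 0`. -/
theorem not_dvd_choose_ordProj {p : ℕ} (hp : p.Prime) {m : ℕ} (hm : 0 < m) :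
    ¬ p ∣ m.choose (p ^ (m.factorization p)) := by
  haveI : Fact p.Prime := ⟨hp⟩
  have key : ∀ t u : ℕ, (((u * p ^ t).choose (p ^ t) : ℕ) : ZMod p) = (u : ZMod p) := by
    intro t
    induction t with
    | zero => intro u; simp
    | succ t ih =>
      intro u
      have h := Choose.choose_modEq_choose_mod_mul_choose_div_nat
        (n := u * p ^ (t + 1)) (k := p ^ (t + 1)) (p := p)
      have hn0 : (u * p ^ (t + 1)) % p = 0 := Nat.mod_eq_zero_of_dvd ⟨u * p ^ t, by ring⟩
      have hk0 : (p ^ (t + 1)) % p = 0 := Nat.mod_eq_zero_of_dvd ⟨p ^ t, by ring⟩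
      have hn1 : (u * p ^ (t + 1)) / p = u * p ^ t := by
        rw [pow_succ, ← mul_assoc, Nat.mul_div_cancel _ hp.pos]
      have hk1 : (p ^ (t + 1)) / p = p ^ t := by
        rw [pow_succ, Nat.mul_div_cancel _ hp.pos]
      calc ((u * p ^ (t + 1)).choose (p ^ (t + 1)) : ZMod p)
          = ((((u * p ^ (t + 1)) % p).choose ((p ^ (t + 1)) % p)
              * (((u * p ^ (t + 1)) / p).choose ((p ^ (t + 1)) / p)) : ℕ) : ZMod p) :=
            (ZMod.natCast_eq_natCast_iff _ _ _).mpr h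
        _ = (u : ZMod p) := by rw [hn0, hk0, hn1, hk1]; simpa using ih u
  intro hdvd
  set t := m.factorization p with ht
  have hm' : m = (m / p ^ t) * p ^ t := by
    rw [mul_comm]; exact (Nat.ordProj_mul_ordCompl_eq_self m p).symm
  have h1 : ((m.choose (p ^ t) : ℕ) : ZMod p) = ((m / p ^ t : ℕ) : ZMod p) := by
    conv_lhs => rw [hm']
    exact key t (m / p ^ t)
  rw [(ZMod.natCast_eq_zero_iff _ p).mpr hdvd] at h1
  exact Nat.not_dvd_ordCompl hp hm.ne'
    ((ZMod.natCast_eq_zero_iff _ p).mp h1.symm)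

/-- The minimal positive `φ`-degree divides every `φ`-degree. -/
theorem expmap_min_dvd_natDegree (φ : A →ₐ[k] A[X]) (hφ : IsExpMap φ)
    (x : A) (n : ℕ) (hn : 0 < n) (hxn : (φ x).natDegree = n)
    (hmin : ∀ a : A, 0 < (φ a).natDegree → n ≤ (φ a).natDegree)
    (a : A) : n ∣ (φ a).natDegree := by
  rcases CharP.char_is_prime_or_zero A (ringChar A) with hp | h0
  · set p := ringChar A with hpdef
    haveI : CharP A p := ringChar.charP A
    have key : ∀ e : A, 0 < (φ e).natDegree →
        n ≤ p ^ (((φ e).natDegree).factorization p) := by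
      intro e he
      have hdvd : p ^ (((φ e).natDegree).factorization p) ∣ (φ e).natDegree :=
        Nat.ordProj_dvd _ p
      have hle := Nat.le_of_dvd he hdvd
      have hpos : 0 < p ^ (((φ e).natDegree).factorization p) := pow_pos hp.pos _
      have hch : (((((φ e).natDegree).choose
          (p ^ (((φ e).natDegree).factorization p))) : ℕ) : A) ≠ 0 := by
        rw [Ne, CharP.cast_eq_zero_iff A p]
        exact not_dvd_choose_ordProj hp he
      obtain ⟨a', ha'⟩ := expmap_exists_deg φ hφ hpos hle hch
      have := hmin a' (by rw [ha']; exact hpos)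
      rwa [ha'] at this
    have hx := key x (by rw [hxn]; exact hn)
    rw [hxn] at hx
    have hnn : n = p ^ (n.factorization p) :=
      le_antisymm hx (Nat.le_of_dvd hn (Nat.ordProj_dvd n p))
    rcases Nat.eq_zero_or_pos (φ a).natDegree with h0' | hpos'
    · simp [h0']
    · have h2 := key a hpos'
      rw [hnn] at h2 ⊢
      refine dvd_trans (pow_dvd_pow p ?_) (Nat.ordProj_dvd _ p)
      exact (Nat.pow_le_pow_iff_right hp.one_lt).mp h2
  · haveI : CharP A 0 := h0 ▸ ringChar.charP A
    have hch : ((((φ x).natDegree).choose 1 : ℕ) : A) ≠ 0 := by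
      rw [hxn, Nat.choose_one_right, Ne, CharP.cast_eq_zero_iff A 0]
      simpa using hn.ne'
    obtain ⟨a', ha'⟩ := expmap_exists_deg φ hφ one_pos (by rw [hxn]; exact hn) hch
    have h1 := hmin a' (by rw [ha']; norm_num)
    rw [ha'] at h1
    have : n = 1 := le_antisymm h1 hn
    simp [this]

end AuxDomain

/-- Let `φ` be a nontrivial exponential map on a domain `A`, `x` of minimal
positive `φ`-degree `n`, and `c = D^n(x)`. Then, inside `Frac(A)`, `A` is contained in
the subring `A^φ[c⁻¹][x]` generated by `A^φ`, `c⁻¹` and `x`. -/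
theorem statement8 {k A : Type*} [Field k] [CommRing A] [IsDomain A] [Algebra k A]
    (φ : A →ₐ[k] A[X]) (hφ : IsExpMap φ)
    (hnt : φ ≠ IsScalarTower.toAlgHom k A A[X])
    (x : A) (n : ℕ) (hn : 0 < n) (hxn : (φ x).natDegree = n)
    (hmin : ∀ a : A, 0 < (φ a).natDegree → n ≤ (φ a).natDegree)
    (c : A) (hc : c = (φ x).coeff n) :
    ∀ a : A, algebraMap A (FractionRing A) a ∈
      Subring.closure
        (insert ((algebraMap A (FractionRing A) c)⁻¹)
          (insert (algebraMap A (FractionRing A) x)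
            (algebraMap A (FractionRing A) '' (expInv φ : Set A)))) := by
  set ι := algebraMap A (FractionRing A) with hι
  set S : Set (FractionRing A) :=
    insert ((ι c)⁻¹) (insert (ι x) (ι '' (expInv φ : Set A))) with hS
  -- basic facts
  have hφx : φ x ≠ 0 := fun h0 => by simp [h0] at hxn; omega
  have hcinv : c ∈ expInv φ := by
    have := expmap_top_coeff_mem φ hφ x
    rwa [hxn, ← hc] at this
  have hφc : φ c = C c := by
    have : φ c = (IsScalarTower.toAlgHom k A A[X]) c := hcinv
    rw [this]; simp [Polynomial.algebraMap_eq]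
  have hc0 : c ≠ 0 := by
    rw [hc, ← hxn]
    exact mt leadingCoeff_eq_zero.mp hφx
  have hinj : Function.Injective ι := IsFractionRing.injective A (FractionRing A)
  have hιc : ι c ≠ 0 := fun h => hc0 (hinj (by simp [h]))
  have hmemB : ∀ b : A, b ∈ expInv φ → ι b ∈ Subring.closure S := by
    intro b hb
    exact Subring.subset_closure (Set.mem_insert_iff.mpr (Or.inr
      (Set.mem_insert_iff.mpr (Or.inr ⟨b, hb, rfl⟩))))
  have hmemx : ι x ∈ Subring.closure S :=
    Subring.subset_closure (Set.mem_insert_iff.mpr (Or.inr (Set.mem_insert _ _)))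
  have hmemc : (ι c)⁻¹ ∈ Subring.closure S := Subring.subset_closure (Set.mem_insert _ _)
  have key : ∀ m : ℕ, ∀ a : A, (φ a).natDegree = m → ι a ∈ Subring.closure S := by
    intro m
    induction m using Nat.strong_induction_on with
    | _ m IH =>
      intro a hma
      rcases Nat.eq_zero_or_pos m with rfl | hmpos
      · refine hmemB a ?_
        have := expmap_top_coeff_mem φ hφ a
        rwa [hma, expmap_coeff_zero φ hφ] at this
      · -- m > 0
        obtain ⟨q, hq⟩ : n ∣ m := hma ▸ expmap_min_dvd_natDegree φ hφ x n hn hxn hmin a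
        set b : A := (φ a).coeff m with hb
        have hbinv : b ∈ expInv φ := by
          have := expmap_top_coeff_mem φ hφ a
          rwa [hma] at this
        have hφb : φ b = C b := by
          have : φ b = (IsScalarTower.toAlgHom k A A[X]) b := hbinv
          rw [this]; simp [Polynomial.algebraMap_eq]
        set a' : A := c ^ q * a - b * x ^ q with ha'
        have hφxq : ((φ x) ^ q).natDegree = m := by
          rw [natDegree_pow, hxn, hq, mul_comm]
        have hlc : (φ x).leadingCoeff = c := by rw [leadingCoeff, hxn, hc]
        have hφxqc : ((φ x) ^ q).coeff m = c ^ q := by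
          rw [← hφxq, ← leadingCoeff, leadingCoeff_pow, hlc]
        have hda' : (φ a').natDegree < m := by
          have hle : (φ a').natDegree ≤ m - 1 := by
            rw [natDegree_le_iff_coeff_eq_zero]
            intro i hi
            have him : m ≤ i := by omega
            rw [ha', map_sub, map_mul, map_mul, map_pow, map_pow, hφc, hφb, ← C_pow,
              coeff_sub, coeff_C_mul, coeff_C_mul]
            rcases eq_or_lt_of_le him with heq2 | hlt
            · rw [← heq2, hφxqc, ← hb]; ring
            · rw [coeff_eq_zero_of_natDegree_lt (by omega : (φ a).natDegree < i),
                coeff_eq_zero_of_natDegree_lt (by omega : ((φ x) ^ q).natDegree < i),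
                mul_zero, mul_zero, sub_self]
          omega
        have ha'mem : ι a' ∈ Subring.closure S := IH _ hda' a' rfl
        have heq : ι a = (ι c)⁻¹ ^ q * (ι a' + ι b * ι x ^ q) := by
          rw [ha', map_sub, map_mul, map_mul, map_pow, map_pow]
          rw [inv_pow, eq_comm, inv_mul_eq_iff_eq_mul₀ (pow_ne_zero _ hιc)]
          ring
        rw [heq]
        exact Subring.mul_mem _ (Subring.pow_mem _ hmemc q)
          (Subring.add_mem _ ha'mem
            (Subring.mul_mem _ (hmemB b hbinv) (Subring.pow_mem _ hmemx q)))
  exact fun a => key _ a rfl
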